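/- Let n ≥ 1, m ≥ 1, G₀ > 0, c_B > 0, R₀ > 0, and C₀ ≥ G₀·c_B. Define R(t) = R₀·e^{C₀·t/n} and φ(x,t) = C₀·(R(t)² − |x|²)/(2n) for x ∈ ℝⁿ, t ≥ 0. Then for every t ≥ 0 and every x with |x| < R(t), the function φ satisfies the supersolution inequality ∂_t φ(x,t) − (m − 1)·φ(x,t)·(Δφ(x,t) + G₀·c_B) − |∇φ(x,t)|² ≥ 0; explicitly, Δφ = −C₀ ≤ −G₀·c_B, ∇φ(x,t) = −C₀·x/n, and ∂_t φ(x,t) = C₀·R(t)·R'(t)/n ≥ C₀²·|x|²/n² = |∇φ(x,t)|². -/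

import Mathlib

/-- The Laplacian of a scalar function on `ℝⁿ`, as the sum of second partial derivatives
along the coordinate directions. -/
noncomputable def laplacianE {n : ℕ} (f : EuclideanSpace ℝ (Fin n) → ℝ)
    (x : EuclideanSpace ℝ (Fin n)) : ℝ :=
  ∑ i : Fin n,
    fderiv ℝ (fun y => fderiv ℝ f y (EuclideanSpace.single i 1)) x (EuclideanSpace.single i 1)

section aux

variable {n : ℕ}

lemma aux_hasFDerivAt (c a : ℝ) (x : EuclideanSpace ℝ (Fin n)) :
    HasFDerivAt (fun y : EuclideanSpace ℝ (Fin n) => c * (a - ‖y‖ ^ 2))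
      ((-(2 * c)) • innerSL ℝ x) x := by
  have h1 : HasFDerivAt (fun y : EuclideanSpace ℝ (Fin n) => ‖y‖ ^ 2)
      (2 • innerSL ℝ x) x := (hasStrictFDerivAt_norm_sq x).hasFDerivAt
  have h2 := ((hasFDerivAt_const a x).sub h1).const_mul c
  refine h2.congr_fderiv ?_
  ext v
  simp [two_smul]
  ring

lemma aux_fderiv (c a : ℝ) (y : EuclideanSpace ℝ (Fin n)) :
    fderiv ℝ (fun z : EuclideanSpace ℝ (Fin n) => c * (a - ‖z‖ ^ 2)) y
      = (-(2 * c)) • innerSL ℝ y :=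
  (aux_hasFDerivAt c a y).fderiv

lemma aux_gradient (c a : ℝ) (x : EuclideanSpace ℝ (Fin n)) :
    HasGradientAt (fun y : EuclideanSpace ℝ (Fin n) => c * (a - ‖y‖ ^ 2))
      ((-(2 * c)) • x) x := by
  rw [hasGradientAt_iff_hasFDerivAt]
  refine (aux_hasFDerivAt c a x).congr_fderiv ?_
  ext v
  simp [real_inner_smul_left]

lemma aux_laplacian (c a : ℝ) (x : EuclideanSpace ℝ (Fin n)) :
    laplacianE (fun y : EuclideanSpace ℝ (Fin n) => c * (a - ‖y‖ ^ 2)) x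
      = -(2 * c) * n := by
  unfold laplacianE
  simp only [aux_fderiv c a]
  have : ∀ i : Fin n,
      fderiv ℝ (fun y : EuclideanSpace ℝ (Fin n) =>
        ((-(2 * c)) • innerSL ℝ y) (EuclideanSpace.single i 1)) x
        (EuclideanSpace.single i 1) = -(2 * c) := by
    intro i
    have heq : (fun y : EuclideanSpace ℝ (Fin n) =>
        ((-(2 * c)) • innerSL ℝ y) (EuclideanSpace.single i 1))
        = fun y => (-(2 * c)) • ((innerSL ℝ (EuclideanSpace.single i (1:ℝ))) y) := by
      funext y
      simp [real_inner_comm]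
    rw [heq]
    have hd : HasFDerivAt
        (fun y : EuclideanSpace ℝ (Fin n) =>
          (-(2 * c)) • ((innerSL ℝ (EuclideanSpace.single i (1:ℝ))) y))
        ((-(2 * c)) • innerSL ℝ (EuclideanSpace.single i (1:ℝ))) x :=
      ((innerSL ℝ (EuclideanSpace.single i (1:ℝ))).hasFDerivAt).const_smul (-(2 * c))
    rw [hd.fderiv]
    simp [EuclideanSpace.inner_single_left]
  simp only [this, Finset.sum_const, Finset.card_univ, Fintype.card_fin, nsmul_eq_mul]
  ring

end aux

set_option maxHeartbeats 1600000 in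
theorem stmt_17 (n : ℕ) (hn : 1 ≤ n) (m G0 cB R0 C0 : ℝ)
    (hm : 1 ≤ m) (hG0 : 0 < G0) (hcB : 0 < cB) (hR0 : 0 < R0) (hC0 : G0 * cB ≤ C0)
    (R : ℝ → ℝ) (hR : R = fun t : ℝ => R0 * Real.exp (C0 * t / n))
    (φ : EuclideanSpace ℝ (Fin n) → ℝ → ℝ)
    (hφ : φ = fun (x : EuclideanSpace ℝ (Fin n)) (t : ℝ) =>
      C0 * (R t ^ 2 - ‖x‖ ^ 2) / (2 * n)) :
    ∀ (t : ℝ), 0 ≤ t → ∀ (x : EuclideanSpace ℝ (Fin n)), ‖x‖ < R t →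
      (0 ≤ deriv (fun s => φ x s) t -
          (m - 1) * φ x t * (laplacianE (fun y => φ y t) x + G0 * cB) -
          ‖gradient (fun y => φ y t) x‖ ^ 2) ∧
      laplacianE (fun y => φ y t) x = -C0 ∧
      -C0 ≤ -(G0 * cB) ∧
      gradient (fun y => φ y t) x = (-(C0 / n)) • x ∧
      deriv (fun s => φ x s) t = C0 * R t * deriv R t / n ∧
      C0 ^ 2 * ‖x‖ ^ 2 / n ^ 2 ≤ C0 * R t * deriv R t / n ∧
      ‖gradient (fun y => φ y t) x‖ ^ 2 = C0 ^ 2 * ‖x‖ ^ 2 / n ^ 2 := by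
  intro t ht x hx
  have hn0 : (0:ℝ) < n := by exact_mod_cast hn
  have hC0pos : 0 < C0 := lt_of_lt_of_le (mul_pos hG0 hcB) hC0
  set c : ℝ := C0 / (2 * n) with hc
  have hcn : -(2 * c) = -(C0 / n) := by
    rw [hc]; field_simp
  have hfun : (fun y : EuclideanSpace ℝ (Fin n) => φ y t)
      = fun y => c * (R t ^ 2 - ‖y‖ ^ 2) := by
    funext y
    rw [hφ, hc]
    ring
  -- gradient
  have hgrad : gradient (fun y => φ y t) x = (-(C0 / n)) • x := by
    rw [hfun, (aux_gradient c (R t ^ 2) x).gradient, hcn]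
  -- laplacian
  have hlap : laplacianE (fun y => φ y t) x = -C0 := by
    rw [hfun, aux_laplacian]
    rw [hc]; field_simp
  -- time derivative
  have hRd : HasDerivAt R (R0 * Real.exp (C0 * t / n) * (C0 / n)) t := by
    rw [hR]
    have h1 : HasDerivAt (fun s : ℝ => C0 * s / n) (C0 / n) t := by
      have := ((hasDerivAt_id t).const_mul C0).div_const (n : ℝ)
      simpa using this
    refine (h1.exp.const_mul R0).congr_deriv ?_
    ring
  have hRt : R t = R0 * Real.exp (C0 * t / n) := by rw [hR]
  have hderivR : deriv R t = R t * (C0 / n) := by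
    rw [hRd.deriv, hRt]
  have hφd : HasDerivAt (fun s => φ x s)
      (C0 * (2 * R t * (R t * (C0 / n))) / (2 * n)) t := by
    rw [hφ]
    have hR2 : HasDerivAt (fun s => R s ^ 2) (2 * R t * (R t * (C0 / n))) t := by
      have := hRd.pow 2
      refine this.congr_deriv ?_
      rw [hRt]; norm_num
    have := ((hR2.sub_const (‖x‖ ^ 2)).const_mul C0).div_const (2 * n)
    simpa using this
  have hderivφ : deriv (fun s => φ x s) t = C0 * R t * deriv R t / n := by
    rw [hφd.deriv, hderivR]
    field_simp
  -- norm of gradient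
  have hxnn : 0 ≤ ‖x‖ := norm_nonneg x
  have hngrad : ‖gradient (fun y => φ y t) x‖ ^ 2 = C0 ^ 2 * ‖x‖ ^ 2 / n ^ 2 := by
    rw [hgrad, norm_smul]
    rw [Real.norm_eq_abs, abs_of_nonpos (neg_nonpos.mpr (by positivity : (0:ℝ) ≤ C0 / n))]
    field_simp
  have hRtpos : 0 < R t := lt_of_le_of_lt hxnn hx
  have hineq : C0 ^ 2 * ‖x‖ ^ 2 / n ^ 2 ≤ C0 * R t * deriv R t / n := by
    rw [hderivR]
    have hx2 : ‖x‖ ^ 2 ≤ R t ^ 2 := by nlinarith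
    have heq : C0 * R t * (R t * (C0 / n)) / n = C0 ^ 2 * R t ^ 2 / n ^ 2 := by
      field_simp
    rw [heq]
    gcongr
  refine ⟨?_, hlap, by linarith, hgrad, hderivφ, hineq, hngrad⟩
  rw [hlap, hngrad, hderivφ]
  have hφnn : 0 ≤ φ x t := by
    rw [hφ]
    have : ‖x‖ ^ 2 ≤ R t ^ 2 := by nlinarith
    apply div_nonneg (mul_nonneg hC0pos.le (by linarith)) (by positivity)
  have h2 : 0 ≤ (m - 1) * φ x t * (C0 - G0 * cB) := by
    apply mul_nonneg (mul_nonneg (by linarith) hφnn) (by linarith)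
  have : -C0 + G0 * cB = -(C0 - G0 * cB) := by ring
  rw [this]
  nlinarith [h2, hineq]
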